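/- arXiv:2210.12304 — 4 statements merged into one kernel-verified Lean document; each statement's English description precedes it below -/
import Mathlib

section
/- Define polynomials Φ_0(x) = x and Φ_k(x) = x + Φ_{k-1}(x)² for k ≥ 1. Then for every k ≥ 0, Φ_k(1/4) ≥ 1/2 − 1/(k+4), with strict inequality for k ≥ 1. -/
/-- `Φ_0(x) = x`, `Φ_k(x) = x + Φ_{k-1}(x)²`. -/
def Phi : ℕ → ℝ → ℝ
  | 0, x => x
  | k + 1, x => x + (Phi k x) ^ 2

/-- For every `k ≥ 0`, `Φ_k(1/4) ≥ 1/2 − 1/(k+4)`, with strict inequality for `k ≥ 1`. -/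
theorem Phi_quarter_ge (k : ℕ) :
    Phi k (1 / 4) ≥ 1 / 2 - 1 / (k + 4) ∧
      (1 ≤ k → Phi k (1 / 4) > 1 / 2 - 1 / (k + 4)) := by
  induction k with
  | zero =>
    constructor
    · norm_num [Phi]
    · omega
  | succ n ih =>
    obtain ⟨h, -⟩ := ih
    have hn : (0:ℝ) < (n:ℝ) + 4 := by positivity
    have hn5 : (0:ℝ) < (n:ℝ) + 5 := by positivity
    have hlb : (1:ℝ)/4 ≤ 1/2 - 1/((n:ℝ)+4) := by
      have : 1/((n:ℝ)+4) ≤ 1/4 := by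
        rw [div_le_div_iff₀ hn (by norm_num)]; linarith
      linarith
    have hp : (1:ℝ)/4 ≤ Phi n (1/4) := le_trans hlb h
    have hsq : (1/2 - 1/((n:ℝ)+4))^2 ≤ (Phi n (1/4))^2 := by
      nlinarith
    have key : 1/2 - 1/((n:ℝ)+5) < 1/4 + (1/2 - 1/((n:ℝ)+4))^2 := by
      have h4 : (1:ℝ)/((n:ℝ)+4) = 1/((n:ℝ)+4) := rfl
      field_simp
      ring_nf
      nlinarith [sq_nonneg ((n:ℝ))]
    have strict : 1/2 - 1/((n:ℝ)+5) < Phi (n+1) (1/4) := by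
      show 1/2 - 1/((n:ℝ)+5) < 1/4 + (Phi n (1/4))^2
      nlinarith
    constructor
    · push_cast
      rw [show ((n:ℝ)+1+4) = (n:ℝ)+5 by ring]
      linarith [strict]
    · intro _
      push_cast
      rw [show ((n:ℝ)+1+4) = (n:ℝ)+5 by ring]
      linarith [strict]
end

section
/- Define Φ_0(x) = x, Φ_k(x) = x + Φ_{k-1}(x)², and set w_k = (k+4)/3 − 2/((k+2)(k+3)). Then for every ε > 0 and every k ≥ 0, Φ_k(1/4 + ε) ≥ Φ_k(1/4) + w_k·ε. -/
private lemma quarter_lb (k : ℕ) : Phi k (1/4) ≥ ((k:ℝ)+2)/(2*((k:ℝ)+4)) := by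
  induction k with
  | zero => simp [Phi]; norm_num
  | succ k ih =>
    have hu : (0:ℝ) ≤ (k:ℝ) := Nat.cast_nonneg k
    have hd : (0:ℝ) ≤ ((k:ℝ)+2)/(2*((k:ℝ)+4)) := by positivity
    have h2 : (Phi k (1/4))^2 ≥ (((k:ℝ)+2)/(2*((k:ℝ)+4)))^2 :=
      pow_le_pow_left₀ hd ih 2
    have key : (1:ℝ)/4 + (((k:ℝ)+2)/(2*((k:ℝ)+4)))^2 ≥ ((k:ℝ)+3)/(2*((k:ℝ)+5)) := by
      rw [ge_iff_le, div_le_iff₀ (by positivity), div_pow]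
      have hde : ((k:ℝ)+2)^2/(2*((k:ℝ)+4))^2 * (2*((k:ℝ)+4))^2 = ((k:ℝ)+2)^2 :=
        div_mul_cancel₀ _ (by positivity)
      nlinarith [sq_nonneg ((k:ℝ)), sq_nonneg (2*((k:ℝ)+4))]
    show (1:ℝ)/4 + (Phi k (1/4))^2 ≥ _
    push_cast
    calc ((k:ℝ)+1+2)/(2*((k:ℝ)+1+4)) = ((k:ℝ)+3)/(2*((k:ℝ)+5)) := by ring_nf
    _ ≤ (1:ℝ)/4 + (((k:ℝ)+2)/(2*((k:ℝ)+4)))^2 := key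
    _ ≤ (1:ℝ)/4 + (Phi k (1/4))^2 := by linarith

private lemma w_pos (u : ℝ) (hu : 0 ≤ u) : 0 < (u+4)/3 - 2/((u+2)*(u+3)) := by
  have h1 : 2/((u+2)*(u+3)) ≤ 2/6 := by
    apply div_le_div_of_nonneg_left (by norm_num) (by norm_num) (by nlinarith)
  have h2 : (4:ℝ)/3 ≤ (u+4)/3 := by linarith
  linarith

private lemma w_succ (u : ℝ) (hu : 0 ≤ u) :
    (u+1+4)/3 - 2/((u+1+2)*(u+1+3)) = 1 + (u+2)/(u+4) * ((u+4)/3 - 2/((u+2)*(u+3))) := by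
  field_simp
  ring

private lemma sq_step (a b W ε q : ℝ) (hε : 0 < ε) (hw : 0 < W)
    (hsq : b^2 ≥ (a+W*ε)^2) (h2a : 2*a ≥ q) : b^2 ≥ a^2 + q*W*ε := by
  nlinarith [mul_le_mul_of_nonneg_right h2a (le_of_lt (mul_pos hw hε)), sq_nonneg (W*ε)]

/-- With `w_k = (k+4)/3 − 2/((k+2)(k+3))`, for every `ε > 0` and every `k ≥ 0`,
`Φ_k(1/4 + ε) ≥ Φ_k(1/4) + w_k·ε`. -/
theorem Phi_linear_lower_bound (ε : ℝ) (hε : 0 < ε) (k : ℕ) :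
    Phi k (1 / 4 + ε) ≥
      Phi k (1 / 4) + ((k + 4) / 3 - 2 / ((k + 2) * (k + 3)) : ℝ) * ε := by
  induction k with
  | zero => simp [Phi]; norm_num
  | succ k ih =>
    have hu : (0:ℝ) ≤ (k:ℝ) := Nat.cast_nonneg k
    have hw := w_pos (k:ℝ) hu
    have ha := quarter_lb k
    have h2a : 2*Phi k (1/4) ≥ ((k:ℝ)+2)/((k:ℝ)+4) := by
      rw [ge_iff_le, div_le_iff₀ (by positivity)]
      rw [ge_iff_le, div_le_iff₀ (by positivity)] at ha
      linarith
    have hih : Phi k (1/4+ε) ≥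
        Phi k (1/4) + (((k:ℝ)+4)/3 - 2/(((k:ℝ)+2)*((k:ℝ)+3))) * ε := by
      have := ih; push_cast at this
      convert this using 3
    have hbnn : (0:ℝ) ≤ Phi k (1/4) + (((k:ℝ)+4)/3 - 2/(((k:ℝ)+2)*((k:ℝ)+3))) * ε := by
      have h0 : (0:ℝ) ≤ Phi k (1/4) := le_trans (by positivity) ha
      nlinarith
    have hsq := pow_le_pow_left₀ hbnn hih 2
    have goal2 := sq_step (Phi k (1/4)) (Phi k (1/4+ε))
      (((k:ℝ)+4)/3 - 2/(((k:ℝ)+2)*((k:ℝ)+3))) ε (((k:ℝ)+2)/((k:ℝ)+4)) hε hw hsq h2a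
    have hws := w_succ (k:ℝ) hu
    have hWse : (((k:ℝ)+1+4)/3 - 2/((((k:ℝ))+1+2)*(((k:ℝ))+1+3)))*ε =
        ε + ((k:ℝ)+2)/((k:ℝ)+4)*((((k:ℝ)+4)/3 - 2/(((k:ℝ)+2)*((k:ℝ)+3))))*ε := by
      rw [hws]; ring
    show (1:ℝ)/4 + ε + (Phi k (1/4+ε))^2 ≥ (1:ℝ)/4 + (Phi k (1/4))^2 + _ * ε
    push_cast
    linarith [goal2, hWse]
end

section
/- Define Φ_0(x) = x, Φ_k(x) = x + Φ_{k-1}(x)², and let ξ_k be the unique positive root of Φ_k(x) = 1. Then for all sufficiently large k (in fact for all k ≥ 1), ξ_k < 1/4 + 3/(2k). -/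
lemma Phi_nonneg (k : ℕ) {x : ℝ} (hx : 0 ≤ x) : 0 ≤ Phi k x := by
  induction k with
  | zero => simpa [Phi] using hx
  | succ n ih => simp only [Phi]; positivity

lemma Phi_mono (k : ℕ) {a b : ℝ} (ha : 0 ≤ a) (hab : a ≤ b) :
    Phi k a ≤ Phi k b := by
  induction k with
  | zero => simpa [Phi] using hab
  | succ n ih =>
    simp only [Phi]
    have := Phi_nonneg n ha
    gcongr

lemma Phi_lower (k : ℕ) {x : ℝ} (hx : 1/4 ≤ x) :
    x + k * (x - 1/4) ≤ Phi k x := by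
  induction k with
  | zero => simp [Phi]
  | succ n ih =>
    have key : Phi n x + (x - 1/4) ≤ x + (Phi n x) ^ 2 := by
      nlinarith [sq_nonneg (Phi n x - 1/2)]
    simp only [Phi]
    push_cast
    nlinarith

/-- For all `k ≥ 1`, the unique positive root `ξ_k` of `Φ_k(x) = 1` satisfies
`ξ_k < 1/4 + 3/(2k)`. -/
theorem xi_lt_quarter_add (k : ℕ) (hk : 1 ≤ k) (ξ : ℝ) (hpos : 0 < ξ)
    (hroot : Phi k ξ = 1) : ξ < 1 / 4 + 3 / (2 * k) := by
  set b : ℝ := 1 / 4 + 3 / (2 * k) with hb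
  have hkpos : (0 : ℝ) < k := by exact_mod_cast hk
  have hbq : (1/4 : ℝ) ≤ b := by
    have : 0 < 3 / (2 * (k : ℝ)) := by positivity
    linarith
  have hPb : 1 < Phi k b := by
    have h1 := Phi_lower k hbq
    have h2 : b + k * (b - 1/4) = 1/4 + 3/(2*k) + 3/2 := by
      rw [hb]; field_simp; ring
    have h3 : 0 < 3 / (2 * (k : ℝ)) := by positivity
    nlinarith
  by_contra h
  push_neg at h
  have h0b : (0:ℝ) ≤ b := le_trans (by norm_num) hbq
  have := Phi_mono k h0b h
  rw [hroot] at this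
  linarith
end

section
/- Define Φ_0(x) = x, Φ_k(x) = x + Φ_{k-1}(x)². If λ is a complex root of Φ_k(x) = 1 with λ ≠ ξ_k (where ξ_k is the unique positive real root), then |λ| > ξ_k. -/
def PhiC : ℕ → ℂ → ℂ
  | 0, x => x
  | k + 1, x => x + (PhiC k x) ^ 2

def PhiR : ℕ → ℝ → ℝ
  | 0, x => x
  | k + 1, x => x + (PhiR k x) ^ 2

lemma PhiC_ofReal (k : ℕ) (x : ℝ) : PhiC k (x : ℂ) = ((PhiR k x : ℝ) : ℂ) := by
  induction k with
  | zero => rfl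
  | succ n ih => simp [PhiC, PhiR, ih]

lemma PhiR_nonneg (k : ℕ) {x : ℝ} (hx : 0 ≤ x) : 0 ≤ PhiR k x := by
  induction k with
  | zero => exact hx
  | succ n ih => simpa [PhiR] using add_nonneg hx (sq_nonneg _)

lemma PhiR_strictMono (k : ℕ) {a b : ℝ} (ha : 0 ≤ a) (hab : a < b) :
    PhiR k a < PhiR k b := by
  induction k with
  | zero => exact hab
  | succ n ih =>
      have h1 : PhiR n a < PhiR n b := ih
      have h2 : (PhiR n a) ^ 2 ≤ (PhiR n b) ^ 2 :=
        pow_le_pow_left₀ (PhiR_nonneg n ha) h1.le 2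
      simpa [PhiR] using add_lt_add_of_lt_of_le hab h2

lemma PhiC_abs_le (k : ℕ) (z : ℂ) : ‖PhiC k z‖ ≤ PhiR k (‖z‖) := by
  induction k with
  | zero => rfl
  | succ n ih =>
      calc ‖z + (PhiC n z) ^ 2‖
          ≤ ‖z‖ + ‖(PhiC n z) ^ 2‖ := norm_add_le _ _
        _ = ‖z‖ + (‖PhiC n z‖) ^ 2 := by simp [norm_pow]
        _ ≤ ‖z‖ + (PhiR n (‖z‖)) ^ 2 := by
              gcongr
        _ = PhiR (n+1) (‖z‖) := rfl

/-- If `λ` is a complex root of `Φ_k(x) = 1` different from the unique positive real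
root `ξ_k`, then `|λ| > ξ_k`. -/
theorem root_abs_gt_xi (k : ℕ) (ξ : ℝ) (hpos : 0 < ξ) (hroot : PhiC k (ξ : ℂ) = 1)
    (lam : ℂ) (hlam : PhiC k lam = 1) (hne : lam ≠ (ξ : ℂ)) :
    ‖lam‖ > ξ := by
  have hxi : PhiR k ξ = 1 := by
    have := (PhiC_ofReal k ξ).symm.trans hroot
    exact_mod_cast this
  set r := ‖lam‖ with hr
  have hge : ξ ≤ r := by
    by_contra h
    push_neg at h
    have h1 : PhiR k r < PhiR k ξ := PhiR_strictMono k (norm_nonneg _) h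
    have h2 : ‖PhiC k lam‖ ≤ PhiR k r := PhiC_abs_le k lam
    rw [hlam] at h2
    simp at h2
    linarith
  rcases lt_or_eq_of_le hge with h | h
  · exact h
  · exfalso
    -- r = ξ
    have hlam0 : lam ≠ 0 := by
      intro h0
      rw [h0] at hr
      simp at hr
      linarith [hr ▸ h]
    cases k with
    | zero =>
        have : lam = 1 := hlam
        have hx1 : ξ = 1 := by simpa [PhiR] using hxi
        exact hne (by rw [this, hx1]; norm_num)
    | succ n =>
        have hsum : lam + (PhiC n lam) ^ 2 = 1 := hlam
        have hwle : ‖PhiC n lam‖ ≤ PhiR n ξ := h ▸ PhiC_abs_le n lam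
        have hkey : ‖lam + (PhiC n lam) ^ 2‖
            = ‖lam‖ + ‖(PhiC n lam) ^ 2‖ := by
          have hle : ‖lam + (PhiC n lam) ^ 2‖
              ≤ ‖lam‖ + ‖(PhiC n lam) ^ 2‖ := norm_add_le _ _
          have hup : ‖lam‖ + ‖(PhiC n lam) ^ 2‖ ≤ 1 := by
            have : ‖(PhiC n lam) ^ 2‖ ≤ (PhiR n ξ) ^ 2 := by
              rw [norm_pow]
              exact pow_le_pow_left₀ (norm_nonneg _) hwle 2
            have hxieq : ξ + (PhiR n ξ) ^ 2 = 1 := hxi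
            have h' : ξ = ‖lam‖ := h.trans hr
            linarith
          have hlo : (1:ℝ) ≤ ‖lam + (PhiC n lam) ^ 2‖ := by
            rw [hsum]; simp
          linarith
        have hray : SameRay ℝ lam ((PhiC n lam) ^ 2) := by
          rw [sameRay_iff_norm_add]
          simpa using hkey
        have hray1 : SameRay ℝ lam (1 : ℂ) := by
          have := (SameRay.refl lam).add_right hray
          rwa [hsum] at this
        obtain ⟨a, b, ha, hb, hab⟩ := hray1.exists_pos hlam0 one_ne_zero
        have h1 : (a : ℂ) * lam = (b : ℂ) := by
          simpa [Complex.real_smul] using hab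
        have hreal : lam = ((b / a : ℝ) : ℂ) := by
          have ha' : (a : ℂ) ≠ 0 := by exact_mod_cast ha.ne'
          rw [Complex.ofReal_div, eq_div_iff ha']
          linear_combination h1
        have hba : 0 < b / a := div_pos hb ha
        have habs : ‖lam‖ = b / a := by
          rw [hreal, Complex.norm_real, Real.norm_eq_abs, abs_of_pos hba]
        have hxba : ξ = b / a := (h.trans hr).trans habs
        exact hne (by rw [hreal, hxba])
end
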